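/- If A is a set with a well-founded strict ordering, then the multiset extension of that ordering on finite multisets over A is well-founded. -/

import Mathlib

/-- One replacement step of the Dershowitz–Manna multiset ordering: `M` is obtained
from `N` by removing one element `x` and adding a finite multiset `T` of elements that
are all strictly smaller (with respect to `r`) than `x`. -/
def DMStep {α : Type*} (r : α → α → Prop) (M N : Multiset α) : Prop :=
  ∃ (x : α) (T Z : Multiset α), N = x ::ₘ Z ∧ (∀ t ∈ T, r t x) ∧ M = Z + T

/-- The Dershowitz–Manna multiset ordering: finitely many replacement steps. -/
def DMLT {α : Type*} (r : α → α → Prop) : Multiset α → Multiset α → Prop :=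
  Relation.TransGen (DMStep r)

/-- Dershowitz–Manna: the multiset extension of a well-founded strict order on `A`
is well-founded on finite multisets over `A`. -/
theorem dmlt_wellFounded {α : Type*} (r : α → α → Prop) (hwf : WellFounded r) :
    WellFounded (DMLT r) := by
  have h : ∀ M N, DMStep r M N → Relation.CutExpand r M N := by
    rintro M N ⟨x, T, Z, rfl, hT, rfl⟩
    exact ⟨T, x, hT, by
      rw [← Multiset.singleton_add]; simp [add_comm, add_assoc, add_left_comm]⟩
  exact Subrelation.wf (fun hmn => Relation.TransGen.mono h _ _ hmn) hwf.cutExpand.transGen
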